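/- The squared Euclidean norm of the vector A^{−1} e_{(0,0,0)} equals ((1+e^{−1/q})/(1−e^{−3}))² · (1−e^{−6})/(1−e^{−2/q}). -/

import Mathlib

open Matrix

noncomputable section

/-- The step function underlying the permutation matrix `P`: it sends the index `(j, x)`
to `((j+1) mod 3q, π_{j+1}(x))` for `0 ≤ j < q`, to `(j+1, x)` for `q ≤ j < 2q`, and to
`((j+1) mod 3q, π_{3q−j}⁻¹(x))` for `2q ≤ j < 3q` (here `π` is 0-indexed). -/
def stepFn (q N : ℕ) (π : Fin q → Equiv.Perm (Fin N)) :
    Fin (3 * q) × Fin N → Fin (3 * q) × Fin N := fun p =>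
  if h : (p.1 : ℕ) < q then
    (⟨((p.1 : ℕ) + 1) % (3 * q), Nat.mod_lt _ ((Nat.zero_le _).trans_lt p.1.isLt)⟩,
      π ⟨(p.1 : ℕ), h⟩ p.2)
  else if h2 : (p.1 : ℕ) < 2 * q then
    (⟨((p.1 : ℕ) + 1) % (3 * q), Nat.mod_lt _ ((Nat.zero_le _).trans_lt p.1.isLt)⟩, p.2)
  else
    (⟨((p.1 : ℕ) + 1) % (3 * q), Nat.mod_lt _ ((Nat.zero_le _).trans_lt p.1.isLt)⟩,
      (π ⟨3 * q - 1 - (p.1 : ℕ), by have := p.1.isLt; omega⟩)⁻¹ p.2)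

/-- The `3qN × 3qN` permutation matrix `P`, sending basis vector `e_{(j,x)}` to
`e_{stepFn (j,x)}`. -/
def permMat (q N : ℕ) (π : Fin q → Equiv.Perm (Fin N)) :
    Matrix (Fin (3 * q) × Fin N) (Fin (3 * q) × Fin N) ℂ :=
  Matrix.of fun r c => if r = stepFn q N π c then 1 else 0

/-- The inverse `P⁻¹` of the permutation matrix `P`, sending `e_{stepFn (j,x)}` to
`e_{(j,x)}`. -/
def permMatInv (q N : ℕ) (π : Fin q → Equiv.Perm (Fin N)) :
    Matrix (Fin (3 * q) × Fin N) (Fin (3 * q) × Fin N) ℂ :=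
  Matrix.of fun r c => if stepFn q N π r = c then 1 else 0

/-- The `6qN × 6qN` matrix
`A = (1+e^{−1/q})⁻¹ (|0⟩⟨1| ⊗ (I − e^{−1/q} P) + |1⟩⟨0| ⊗ (I − e^{−1/q} P⁻¹))`. -/
def qlspMat (q N : ℕ) (π : Fin q → Equiv.Perm (Fin N)) :
    Matrix (Fin 2 × Fin (3 * q) × Fin N) (Fin 2 × Fin (3 * q) × Fin N) ℂ :=
  Matrix.of fun r c =>
    ((((1 : ℝ) + Real.exp (-1 / q)) : ℝ) : ℂ)⁻¹ *
      (if r.1 = 0 ∧ c.1 = 1 then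
        ((1 : Matrix (Fin (3 * q) × Fin N) (Fin (3 * q) × Fin N) ℂ)
            - (Real.exp (-1 / q) : ℂ) • permMat q N π) r.2 c.2
      else if r.1 = 1 ∧ c.1 = 0 then
        ((1 : Matrix (Fin (3 * q) × Fin N) (Fin (3 * q) × Fin N) ℂ)
            - (Real.exp (-1 / q) : ℂ) • permMatInv q N π) r.2 c.2
      else 0)

namespace QLSP

variable {q N : ℕ} (π : Fin q → Equiv.Perm (Fin N))

/-- successor mod 3q on `Fin (3*q)` -/
def succFin (j : Fin (3 * q)) : Fin (3 * q) :=
  ⟨((j : ℕ) + 1) % (3 * q), Nat.mod_lt _ ((Nat.zero_le _).trans_lt j.isLt)⟩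

/-- the permutation applied at column `j` -/
def Tperm (π : Fin q → Equiv.Perm (Fin N)) (j : Fin (3 * q)) : Equiv.Perm (Fin N) :=
  if h : (j : ℕ) < q then π ⟨(j : ℕ), h⟩
  else if h2 : (j : ℕ) < 2 * q then 1
  else (π ⟨3 * q - 1 - (j : ℕ), by have := j.isLt; omega⟩)⁻¹

lemma stepFn_eq (p : Fin (3 * q) × Fin N) :
    stepFn q N π p = (succFin p.1, Tperm π p.1 p.2) := by
  unfold stepFn Tperm succFin
  split_ifs <;> rfl

/-- word of permutations accumulated along `k` steps starting at column `j` -/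
def Wp (π : Fin q → Equiv.Perm (Fin N)) : ℕ → Fin (3 * q) → Equiv.Perm (Fin N)
  | 0, _ => 1
  | (k + 1), j => Wp π k (succFin j) * Tperm π j

lemma stepFn_iterate (k : ℕ) (p : Fin (3 * q) × Fin N) :
    (stepFn q N π)^[k] p = (succFin^[k] p.1, Wp π k p.1 p.2) := by
  induction k generalizing p with
  | zero => simp [Wp]
  | succ k ih =>
    rw [Function.iterate_succ_apply, stepFn_eq, ih]
    simp [Wp, Function.iterate_succ_apply]

lemma Wp_add (a b : ℕ) (j : Fin (3 * q)) :
    Wp π (a + b) j = Wp π a (succFin^[b] j) * Wp π b j := by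
  induction b generalizing j with
  | zero => simp [Wp]
  | succ b ih =>
    show Wp π ((a + b) + 1) j = _
    rw [Wp, ih, Function.iterate_succ_apply]
    simp [Wp, mul_assoc]

lemma Wp_succ' (k : ℕ) (j : Fin (3 * q)) :
    Wp π (k + 1) j = Tperm π (succFin^[k] j) * Wp π k j := by
  have h := Wp_add π 1 k j
  rw [Nat.add_comm 1 k] at h
  rw [h]
  simp [Wp]

lemma succFin_iterate_val (k : ℕ) (j : Fin (3 * q)) :
    ((succFin^[k] j : Fin (3 * q)) : ℕ) = ((j : ℕ) + k) % (3 * q) := by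
  induction k with
  | zero => simp [Nat.mod_eq_of_lt j.isLt]
  | succ k ih =>
    rw [Function.iterate_succ_apply', succFin]
    simp only [ih]
    rw [Nat.mod_add_mod, Nat.add_assoc]

end QLSP
namespace QLSP2
open QLSP

variable {q N : ℕ} (π : Fin q → Equiv.Perm (Fin N))

/-- partial products π_{k-1} ⋯ π_0 -/
def Vp (π : Fin q → Equiv.Perm (Fin N)) : ℕ → Equiv.Perm (Fin N)
  | 0 => 1
  | (k + 1) => if h : k < q then π ⟨k, h⟩ * Vp π k else Vp π k

lemma three_q_pos (hq : 1 ≤ q) : 0 < 3 * q := by omega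

lemma succFin_iterate_zero (hq : 1 ≤ q) (k : ℕ) (hk : k < 3 * q) :
    succFin^[k] (⟨0, three_q_pos hq⟩ : Fin (3 * q)) = ⟨k, hk⟩ := by
  apply Fin.ext
  rw [succFin_iterate_val]
  simp [Nat.mod_eq_of_lt hk]

lemma Wp_le_q (hq : 1 ≤ q) : ∀ k, k ≤ q → Wp π k (⟨0, three_q_pos hq⟩ : Fin (3 * q)) = Vp π k := by
  intro k
  induction k with
  | zero => intro _; rfl
  | succ k ih =>
    intro hk1
    have hkq : k < q := by omega
    rw [Wp_succ', succFin_iterate_zero hq k (by omega), ih (by omega)]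
    rw [Tperm, dif_pos hkq, Vp, dif_pos hkq]

lemma Wp_mid (hq : 1 ≤ q) : ∀ i, i ≤ q →
    Wp π (q + i) (⟨0, three_q_pos hq⟩ : Fin (3 * q)) = Vp π q := by
  intro i
  induction i with
  | zero => intro _; exact Wp_le_q π hq q le_rfl
  | succ i ih =>
    intro hi1
    rw [show q + (i + 1) = (q + i) + 1 by ring, Wp_succ',
      succFin_iterate_zero hq (q + i) (by omega), ih (by omega)]
    rw [Tperm]
    rw [dif_neg (by simp only [Fin.val_mk]; omega), dif_pos (by simp only [Fin.val_mk]; omega)]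
    simp

lemma Wp_last (hq : 1 ≤ q) : ∀ i, i ≤ q →
    Wp π (2 * q + i) (⟨0, three_q_pos hq⟩ : Fin (3 * q)) = Vp π (q - i) := by
  intro i
  induction i with
  | zero =>
    intro _
    have := Wp_mid π hq q le_rfl
    rw [show q + q = 2 * q by ring] at this
    simpa using this
  | succ i ih =>
    intro hi1
    rw [show 2 * q + (i + 1) = (2 * q + i) + 1 by ring, Wp_succ',
      succFin_iterate_zero hq (2 * q + i) (by omega), ih (by omega)]
    rw [Tperm]
    rw [dif_neg (by simp only [Fin.val_mk]; omega), dif_neg (by simp only [Fin.val_mk]; omega)]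
    have h1 : q - i = (q - i - 1) + 1 := by omega
    have h2 : q - i - 1 < q := by omega
    rw [h1, Vp, dif_pos h2]
    have h3 : (⟨3 * q - 1 - (2 * q + i), by omega⟩ : Fin q) = ⟨q - i - 1, h2⟩ := by
      apply Fin.ext; simp; omega
    rw [h3, ← mul_assoc, inv_mul_cancel, one_mul]
    congr 1

lemma Wp_full_zero (hq : 1 ≤ q) :
    Wp π (3 * q) (⟨0, three_q_pos hq⟩ : Fin (3 * q)) = 1 := by
  have := Wp_last π hq q le_rfl
  rw [show 2 * q + q = 3 * q by ring] at this
  simpa [Vp] using this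

lemma Wp_full (hq : 1 ≤ q) (j : Fin (3 * q)) : Wp π (3 * q) j = 1 := by
  have j0 : Fin (3 * q) := ⟨0, by omega⟩
  have h1 := Wp_add π (3 * q) (j : ℕ) (⟨0, by omega⟩ : Fin (3 * q))
  have h2 := Wp_add π (j : ℕ) (3 * q) (⟨0, by omega⟩ : Fin (3 * q))
  have e1 : succFin^[(j : ℕ)] (⟨0, by omega⟩ : Fin (3 * q)) = j :=
    Fin.ext (by rw [succFin_iterate_val]; simp [Nat.mod_eq_of_lt j.isLt])
  have e2 : succFin^[3 * q] (⟨0, by omega⟩ : Fin (3 * q)) = (⟨0, by omega⟩ : Fin (3 * q)) :=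
    Fin.ext (by rw [succFin_iterate_val]; simp)
  rw [e1] at h1
  rw [e2, Wp_full_zero π hq, mul_one] at h2
  rw [Nat.add_comm (3 * q) (j : ℕ), h2] at h1
  exact mul_right_cancel (h1.symm.trans (one_mul _).symm)

lemma stepFn_iterate_full (hq : 1 ≤ q) (p : Fin (3 * q) × Fin N) :
    (stepFn q N π)^[3 * q] p = p := by
  rw [stepFn_iterate, Wp_full π hq]
  refine Prod.ext (Fin.ext ?_) rfl
  rw [succFin_iterate_val]
  simp [Nat.mod_eq_of_lt p.1.isLt]

lemma stepFn_injective (hq : 1 ≤ q) : Function.Injective (stepFn q N π) := by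
  have h : Function.LeftInverse ((stepFn q N π)^[3 * q - 1]) (stepFn q N π) := by
    intro p
    have h3 : 3 * q = (3 * q - 1) + 1 := by omega
    rw [← Function.iterate_succ_apply, Nat.succ_eq_add_one, ← h3]
    exact stepFn_iterate_full π hq p
  exact h.injective

end QLSP2
namespace QLSP3
open QLSP QLSP2 Finset

variable {q N : ℕ} (π : Fin q → Equiv.Perm (Fin N))

lemma permMat_pow (k : ℕ) :
    (permMat q N π) ^ k =
      Matrix.of fun r c => if r = (stepFn q N π)^[k] c then (1 : ℂ) else 0 := by
  induction k with
  | zero =>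
    ext r c
    simp [Matrix.one_apply]
    rfl
  | succ k ih =>
    ext r c
    rw [pow_succ, ih]
    simp only [Matrix.mul_apply, Matrix.of_apply, permMat]
    rw [Finset.sum_eq_single (stepFn q N π c)]
    · simp [Function.iterate_succ_apply]
      rfl
    · intro s _ hs
      simp [hs]
    · simp

lemma permMat_pow_full (hq : 1 ≤ q) : (permMat q N π) ^ (3 * q) = 1 := by
  rw [permMat_pow]
  ext r c
  simp only [Matrix.of_apply, stepFn_iterate_full π hq, Matrix.one_apply]

lemma permMatInv_eq_pow (hq : 1 ≤ q) :
    permMatInv q N π = (permMat q N π) ^ (3 * q - 1) := by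
  rw [permMat_pow]
  ext r c
  simp only [permMatInv, Matrix.of_apply]
  congr 1
  simp only [eq_iff_iff]
  constructor
  · rintro rfl
    have : (stepFn q N π)^[3 * q - 1] (stepFn q N π r) = r := by
      have h3 : 3 * q = (3 * q - 1) + 1 := by omega
      rw [← Function.iterate_succ_apply, Nat.succ_eq_add_one, ← h3]
      exact stepFn_iterate_full π hq r
    exact this.symm
  · rintro rfl
    have h3 : 3 * q = (3 * q - 1) + 1 := by omega
    have h4 : (stepFn q N π)^[(3 * q - 1) + 1] c = c := by
      rw [← h3]; exact stepFn_iterate_full π hq c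
    rw [Function.iterate_succ_apply'] at h4
    exact h4

lemma permMat_mul_inv (hq : 1 ≤ q) :
    permMat q N π * permMatInv q N π = 1 := by
  have h3 : 3 * q = (3 * q - 1) + 1 := by omega
  rw [permMatInv_eq_pow π hq, ← pow_succ', ← h3]
  exact permMat_pow_full π hq

lemma permMatInv_pow_full (hq : 1 ≤ q) : (permMatInv q N π) ^ (3 * q) = 1 := by
  rw [permMatInv_eq_pow π hq, ← pow_mul,
    show (3 * q - 1) * (3 * q) = 3 * q * (3 * q - 1) by ring, pow_mul,
    permMat_pow_full π hq, one_pow]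

/-- the geometric-series inverse of `1 - t • M` for `M` with `M ^ n = 1` -/
lemma geom_inverse {n : ℕ} (hn : 0 < n)
    (M : Matrix (Fin (3 * q) × Fin N) (Fin (3 * q) × Fin N) ℂ) (hM : M ^ n = 1)
    (t : ℂ) (ht : (1 : ℂ) - t ^ n ≠ 0) :
    (1 - t • M) * ((1 - t ^ n)⁻¹ • ∑ k ∈ range n, (t • M) ^ k) = 1 := by
  rw [Matrix.mul_smul]
  have h1 : (1 - t • M) * ∑ k ∈ range n, (t • M) ^ k = 1 - (t • M) ^ n := by
    have := mul_geom_sum (t • M) n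
    calc (1 - t • M) * ∑ k ∈ range n, (t • M) ^ k
        = -(((t • M) - 1) * ∑ k ∈ range n, (t • M) ^ k) := by noncomm_ring
      _ = 1 - (t • M) ^ n := by rw [this, neg_sub]
  rw [h1, smul_pow, hM]
  have h2 : (1 : Matrix (Fin (3 * q) × Fin N) (Fin (3 * q) × Fin N) ℂ) - t ^ n • 1
      = (1 - t ^ n) • (1 : Matrix (Fin (3 * q) × Fin N) (Fin (3 * q) × Fin N) ℂ) := by
    rw [sub_smul, one_smul]
  rw [h2, smul_smul, inv_mul_cancel₀ ht, one_smul]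

end QLSP3
namespace QLSP4
open QLSP QLSP2 QLSP3 Finset

def Lmat (q N : ℕ) (π : Fin q → Equiv.Perm (Fin N)) :
    Matrix (Fin (3 * q) × Fin N) (Fin (3 * q) × Fin N) ℂ :=
  (1 - ((Real.exp (-1 / q) : ℝ) : ℂ) ^ (3 * q))⁻¹ •
    ∑ k ∈ range (3 * q), (((Real.exp (-1 / q) : ℝ) : ℂ) • permMat q N π) ^ k

def Kmat (q N : ℕ) (π : Fin q → Equiv.Perm (Fin N)) :
    Matrix (Fin (3 * q) × Fin N) (Fin (3 * q) × Fin N) ℂ :=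
  (1 - ((Real.exp (-1 / q) : ℝ) : ℂ) ^ (3 * q))⁻¹ •
    ∑ k ∈ range (3 * q), (((Real.exp (-1 / q) : ℝ) : ℂ) • permMatInv q N π) ^ k

def Bmat (q N : ℕ) (π : Fin q → Equiv.Perm (Fin N)) :
    Matrix (Fin 2 × Fin (3 * q) × Fin N) (Fin 2 × Fin (3 * q) × Fin N) ℂ :=
  Matrix.of fun r c =>
    ((((1 : ℝ) + Real.exp (-1 / q)) : ℝ) : ℂ) *
      (if r.1 = 0 ∧ c.1 = 1 then Kmat q N π r.2 c.2
      else if r.1 = 1 ∧ c.1 = 0 then Lmat q N π r.2 c.2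
      else 0)

variable {q N : ℕ} (π : Fin q → Equiv.Perm (Fin N))

lemma exp_pow_lt_one (hq : 1 ≤ q) {n : ℕ} (hn : 0 < n) : Real.exp (-1 / q) ^ n < 1 := by
  have h1 : Real.exp (-1 / q) < 1 := by
    rw [Real.exp_lt_one_iff]
    have h0 : (0 : ℝ) < q := by
      have : (1 : ℝ) ≤ q := by exact_mod_cast hq
      linarith
    rw [div_neg_iff]
    right
    constructor <;> linarith
  calc Real.exp (-1 / q) ^ n ≤ Real.exp (-1 / q) ^ 1 :=
        pow_le_pow_of_le_one (Real.exp_nonneg _) h1.le hn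
    _ = Real.exp (-1 / q) := pow_one _
    _ < 1 := h1

lemma one_sub_pow_ne (hq : 1 ≤ q) :
    (1 : ℂ) - ((Real.exp (-1 / q) : ℝ) : ℂ) ^ (3 * q) ≠ 0 := by
  have h1 : Real.exp (-1 / q) ^ (3 * q) < 1 := exp_pow_lt_one hq (by omega)
  have h2 : (1 : ℂ) - ((Real.exp (-1 / q) : ℝ) : ℂ) ^ (3 * q)
      = (((1 - Real.exp (-1 / q) ^ (3 * q) : ℝ)) : ℂ) := by push_cast; ring
  rw [h2]
  exact_mod_cast (by linarith : (1 : ℝ) - Real.exp (-1 / q) ^ (3 * q) ≠ 0)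

lemma hL (hq : 1 ≤ q) :
    ((1 : Matrix (Fin (3 * q) × Fin N) (Fin (3 * q) × Fin N) ℂ)
      - ((Real.exp (-1 / q) : ℝ) : ℂ) • permMat q N π) * Lmat q N π = 1 :=
  geom_inverse (by omega) _ (permMat_pow_full π hq) _ (one_sub_pow_ne hq)

lemma hK (hq : 1 ≤ q) :
    ((1 : Matrix (Fin (3 * q) × Fin N) (Fin (3 * q) × Fin N) ℂ)
      - ((Real.exp (-1 / q) : ℝ) : ℂ) • permMatInv q N π) * Kmat q N π = 1 :=
  geom_inverse (by omega) _ (permMatInv_pow_full π hq) _ (one_sub_pow_ne hq)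

end QLSP4
namespace QLSP5
open QLSP QLSP2 QLSP3 QLSP4 Finset

variable {q N : ℕ} (π : Fin q → Equiv.Perm (Fin N))

lemma coef_ne : ((((1 : ℝ) + Real.exp (-1 / (q : ℝ))) : ℝ) : ℂ) ≠ 0 := by
  have : (0 : ℝ) < 1 + Real.exp (-1 / q) := by positivity
  exact_mod_cast this.ne'

lemma sum_block (c : ℂ) (hc : c ≠ 0)
    (M L' : Matrix (Fin (3 * q) × Fin N) (Fin (3 * q) × Fin N) ℂ) (h : M * L' = 1)
    (rv cv : Fin (3 * q) × Fin N) :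
    ∑ s, (c⁻¹ * M rv s) * (c * L' s cv) = (1 : Matrix _ _ ℂ) rv cv := by
  rw [← h, Matrix.mul_apply]
  apply Finset.sum_congr rfl
  intro s _
  field_simp

lemma hAB (hq : 1 ≤ q) : qlspMat q N π * Bmat q N π = 1 := by
  ext ⟨rb, rv⟩ ⟨cb, cv⟩
  rw [Matrix.mul_apply, Fintype.sum_prod_type]
  rw [Fin.sum_univ_two]
  fin_cases rb <;> fin_cases cb <;>
    simp only [qlspMat, Bmat, Matrix.of_apply, Matrix.one_apply, Prod.ext_iff, Fin.mk_zero,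
      Fin.mk_one, zero_ne_one, one_ne_zero, and_true, true_and, and_false, false_and,
      if_true, if_false, ite_false, ite_true, mul_zero, zero_mul, Finset.sum_const_zero,
      add_zero, zero_add]
  · have h1 : (if rv.1 = cv.1 ∧ rv.2 = cv.2 then (1 : ℂ) else 0)
        = (1 : Matrix (Fin (3 * q) × Fin N) (Fin (3 * q) × Fin N) ℂ) rv cv := by
      simp [Matrix.one_apply, Prod.ext_iff]
    rw [h1]
    exact sum_block _ coef_ne _ _ (hL π hq) rv cv
  · have h1 : (if rv.1 = cv.1 ∧ rv.2 = cv.2 then (1 : ℂ) else 0)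
        = (1 : Matrix (Fin (3 * q) × Fin N) (Fin (3 * q) × Fin N) ℂ) rv cv := by
      simp [Matrix.one_apply, Prod.ext_iff]
    rw [h1]
    exact sum_block _ coef_ne _ _ (hK π hq) rv cv

end QLSP5
namespace QLSP6
open QLSP QLSP2 QLSP3 QLSP4 QLSP5 Finset

variable {q N : ℕ} (π : Fin q → Equiv.Perm (Fin N))

lemma column_sum (hq : 1 ≤ q) (hN : 1 ≤ N) (j : Fin (3 * q)) (x : Fin N) :
    ∑ k ∈ range (3 * q),
        ((((Real.exp (-1 / q) : ℝ) : ℂ) • permMat q N π) ^ k) (j, x)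
          ((⟨0, three_q_pos hq⟩ : Fin (3 * q)), (⟨0, hN⟩ : Fin N))
      = if x = Wp π (j : ℕ) (⟨0, three_q_pos hq⟩ : Fin (3 * q)) (⟨0, hN⟩ : Fin N) then
          ((Real.exp (-1 / q) : ℝ) : ℂ) ^ (j : ℕ) else 0 := by
  have e1 : ∀ (k : ℕ) (hk : k < 3 * q),
      succFin^[k] (⟨0, by omega⟩ : Fin (3 * q)) = ⟨k, hk⟩ :=
    fun k hk => succFin_iterate_zero hq k hk
  rw [Finset.sum_eq_single_of_mem (j : ℕ) (Finset.mem_range.2 j.isLt)]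
  · rw [smul_pow, Matrix.smul_apply, permMat_pow, Matrix.of_apply, stepFn_iterate]
    rw [e1 (j : ℕ) j.isLt]
    have hj : (⟨(j : ℕ), by omega⟩ : Fin (3 * q)) = j := rfl
    rw [hj]
    by_cases hx : x = Wp π (j : ℕ) (⟨0, by omega⟩ : Fin (3 * q)) (⟨0, by omega⟩ : Fin N)
    · simp [hx, Prod.ext_iff, smul_eq_mul]
    · simp [hx, Prod.ext_iff, Ne.symm hx, smul_eq_mul]
  · intro k hk hkj
    rw [smul_pow, Matrix.smul_apply, permMat_pow, Matrix.of_apply, stepFn_iterate]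
    rw [e1 k (Finset.mem_range.1 hk)]
    have : ¬((j, x) = ((⟨k, by exact Finset.mem_range.1 hk⟩ : Fin (3 * q)),
        Wp π k (⟨0, by omega⟩ : Fin (3 * q)) (⟨0, by omega⟩ : Fin N))) := by
      simp only [Prod.mk.injEq, not_and]
      intro hjk
      exact absurd (congrArg Fin.val hjk) (by simpa using hkj.symm)
    simp [this, smul_eq_mul]

end QLSP6
/-- The squared Euclidean norm of the vector `A⁻¹ e_{(0,0,0)}` equals
`((1+e^{−1/q})/(1−e^{−3}))² · (1−e^{−6})/(1−e^{−2/q})`. -/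
theorem qlspMat_inv_mulVec_single_norm_sq (q N : ℕ) (hq : 1 ≤ q) (hN : 1 ≤ N)
    (π : Fin q → Equiv.Perm (Fin N)) :
    ∑ p : Fin 2 × Fin (3 * q) × Fin N,
        ‖(qlspMat q N π)⁻¹.mulVec
          (Pi.single ((0 : Fin 2), (⟨0, by omega⟩ : Fin (3 * q)),
            (⟨0, by omega⟩ : Fin N)) 1) p‖ ^ 2 =
      ((1 + Real.exp (-1 / q)) / (1 - Real.exp (-3))) ^ 2 *
        (1 - Real.exp (-6)) / (1 - Real.exp (-2 / q)) := by
  classical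
  rw [Matrix.inv_eq_right_inv (QLSP5.hAB π hq)]
  simp only [Matrix.mulVec_single, mul_one]
  simp only [MulOpposite.op_one, one_smul, Matrix.col, Matrix.transpose_apply]
  rw [Fintype.sum_prod_type, Fin.sum_univ_two]
  have hzero : ∑ y : Fin (3 * q) × Fin N,
      ‖QLSP4.Bmat q N π (0, y) (0, ⟨0, by omega⟩, ⟨0, by omega⟩)‖ ^ 2 = 0 := by
    apply Finset.sum_eq_zero
    intro y _
    simp [QLSP4.Bmat]
  rw [hzero, zero_add]
  have hone : ∀ y : Fin (3 * q) × Fin N,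
      QLSP4.Bmat q N π (1, y) (0, ⟨0, by omega⟩, ⟨0, by omega⟩)
        = ((((1 : ℝ) + Real.exp (-1 / q)) : ℝ) : ℂ) *
          ((1 - ((Real.exp (-1 / q) : ℝ) : ℂ) ^ (3 * q))⁻¹ *
            (if y.2 = QLSP.Wp π (y.1 : ℕ) (⟨0, by omega⟩ : Fin (3 * q)) (⟨0, by omega⟩ : Fin N)
              then ((Real.exp (-1 / q) : ℝ) : ℂ) ^ (y.1 : ℕ) else 0)) := by
    intro y
    simp only [QLSP4.Bmat, Matrix.of_apply, QLSP4.Lmat, Matrix.smul_apply, Matrix.sum_apply,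
      smul_eq_mul]
    rw [show ∑ k ∈ Finset.range (3 * q),
        ((((Real.exp (-1 / q) : ℝ) : ℂ) • permMat q N π) ^ k) y (⟨0, by omega⟩, ⟨0, by omega⟩)
        = _ from QLSP6.column_sum π hq hN y.1 y.2]
    simp
  simp only [hone]
  rw [Fintype.sum_prod_type]
  set E := Real.exp (-1 / (q : ℝ)) with hE
  have hE0 : 0 < E := Real.exp_pos _
  have hE1 : E ^ (3 * q) < 1 := QLSP4.exp_pow_lt_one hq (by omega)
  have hxsum : ∀ j : Fin (3 * q),
      ∑ x : Fin N,
        ‖((((1 : ℝ) + E) : ℝ) : ℂ) *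
          ((1 - ((E : ℝ) : ℂ) ^ (3 * q))⁻¹ *
            (if x = QLSP.Wp π (j : ℕ) (⟨0, by omega⟩ : Fin (3 * q)) (⟨0, by omega⟩ : Fin N)
              then ((E : ℝ) : ℂ) ^ (j : ℕ) else 0))‖ ^ 2
        = ((1 + E) * (1 - E ^ (3 * q))⁻¹ * E ^ (j : ℕ)) ^ 2 := by
    intro j
    rw [Finset.sum_eq_single_of_mem
      (QLSP.Wp π (j : ℕ) (⟨0, by omega⟩ : Fin (3 * q)) (⟨0, by omega⟩ : Fin N))
      (Finset.mem_univ _)]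
    · rw [if_pos rfl]
      have hcast : ((((1 : ℝ) + E) : ℝ) : ℂ) *
          ((1 - ((E : ℝ) : ℂ) ^ (3 * q))⁻¹ * ((E : ℝ) : ℂ) ^ (j : ℕ))
          = ((((1 + E) * (1 - E ^ (3 * q))⁻¹ * E ^ (j : ℕ)) : ℝ) : ℂ) := by
        push_cast
        ring
      rw [hcast, Complex.norm_real, Real.norm_eq_abs, sq_abs]
    · intro x _ hx
      rw [if_neg hx]
      simp
  simp only [hxsum]
  have hterm : ∀ j : Fin (3 * q),
      ((1 + E) * (1 - E ^ (3 * q))⁻¹ * E ^ (j : ℕ)) ^ 2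
        = ((1 + E) * (1 - E ^ (3 * q))⁻¹) ^ 2 * (E ^ 2) ^ (j : ℕ) := by
    intro j
    rw [mul_pow, ← pow_mul, ← pow_mul]
    congr 2
    omega
  simp only [hterm]
  rw [← Finset.mul_sum]
  rw [Fin.sum_univ_eq_sum_range (fun k => (E ^ 2) ^ k) (3 * q)]
  have hE2ne : E ^ 2 ≠ 1 := by
    have : E ^ 2 < 1 := QLSP4.exp_pow_lt_one hq (by omega)
    linarith
  rw [geom_sum_eq hE2ne]
  -- numeric identities
  have hq0 : (q : ℝ) ≠ 0 := by positivity
  have e3 : E ^ (3 * q) = Real.exp (-3) := by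
    rw [hE, ← Real.exp_nat_mul]
    congr 1
    field_simp
    push_cast
    ring
  have e2 : E ^ 2 = Real.exp (-2 / q) := by
    rw [hE, ← Real.exp_nat_mul]
    congr 1
    push_cast
    field_simp
  have e6 : (E ^ 2) ^ (3 * q) = Real.exp (-6) := by
    rw [← pow_mul, hE, ← Real.exp_nat_mul]
    congr 1
    push_cast
    field_simp
    ring
  rw [e6, e2, e3]
  have h3 : (1 : ℝ) - Real.exp (-3) ≠ 0 := by
    have : Real.exp (-3) < 1 := Real.exp_lt_one_iff.2 (by norm_num)
    linarith
  have h2q : (1 : ℝ) - Real.exp (-2 / q) ≠ 0 := by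
    have : Real.exp (-2 / q) < 1 := Real.exp_lt_one_iff.2 (by
      have h0 : (0 : ℝ) < q := by positivity
      rw [div_neg_iff]; right; constructor <;> linarith)
    linarith
  have h2q' : Real.exp (-2 / q) - 1 ≠ 0 := fun h => h2q (by linarith [sub_eq_zero.1 h])
  field_simp
  ring_nf
  rw [show -1 + Real.exp (-((q : ℝ)⁻¹ * 2)) = -(1 - Real.exp (-((q : ℝ)⁻¹ * 2))) by ring, inv_neg]
  ring
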